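/- Fix reals α, β > −1 and integers n, k, m, j with 0 ≤ k, k + 1 ≤ n, and 0 ≤ j ≤ m. Let Q_{n,k}(x,y) denote the derivative at α of the map a ↦ P^{(a,β)}_{n,k}(x,y). If j ≠ k, or if j = k and m > n, then ∬_{y² ≤ x ≤ 1} P^{(α,β)}_{m,j}(x,y) · Q_{n,k}(x,y) · (1−x)^α (x−y²)^β dx dy = 0. -/

import Mathlib

open Finset MeasureTheory Real

/-- Pochhammer symbol `(a)_m = a (a+1) ⋯ (a+m-1)`. -/
noncomputable def poch (a : ℝ) (m : ℕ) : ℝ := ∏ i ∈ Finset.range m, (a + i)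

lemma poch_zero (a : ℝ) : poch a 0 = 1 := by simp [poch]

lemma poch_succ (a : ℝ) (m : ℕ) : poch a (m + 1) = poch a m * (a + m) := by
  simp [poch, Finset.prod_range_succ]

lemma poch_succ' (a : ℝ) (m : ℕ) : poch a (m + 1) = a * poch (a + 1) m := by
  rw [poch, Finset.prod_range_succ']
  simp only [Nat.cast_zero, add_zero, mul_comm]
  congr 1
  · exact Finset.prod_congr rfl (fun i _ => by push_cast; ring)

/-- Chu–Vandermonde-type polynomial identity. -/
lemma vand (N : ℕ) (A B : ℝ) :
    ∑ i ∈ Finset.range (N + 1),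
      (-1 : ℝ) ^ i * (N.choose i : ℝ) * poch A i * poch (B + i) (N - i) =
    poch (B - A) N := by
  induction N generalizing A B with
  | zero => simp [poch_zero]
  | succ N ih =>
    set g : ℕ → ℝ := fun i => (-1 : ℝ) ^ i * ((N+1).choose i : ℝ) * poch A i * poch (B + i) (N + 1 - i) with hg
    set g1 : ℕ → ℝ := fun i => (-1 : ℝ) ^ i * (N.choose i : ℝ) * poch A i * poch (B + i) (N + 1 - i) with hg1
    set g2 : ℕ → ℝ := fun i => (-1 : ℝ) ^ (i+1) * (N.choose i : ℝ) * poch A (i+1) * poch (B + ((i+1 : ℕ) : ℝ)) (N - i) with hg2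
    have h0 : ∑ i ∈ Finset.range (N + 2), g i = (∑ i ∈ Finset.range (N+1), g (i+1)) + g 0 :=
      Finset.sum_range_succ' g (N+1)
    have h1 : ∀ i ∈ Finset.range (N+1), g (i+1) = g2 i + g1 (i+1) := by
      intro i hi
      simp only [hg, hg1, hg2]
      have hch : (N+1).choose (i+1) = N.choose i + N.choose (i+1) := Nat.choose_succ_succ N i
      have h2 : N + 1 - (i+1) = N - i := by omega
      rw [hch, h2]
      push_cast
      ring
    have h2 : ∑ i ∈ Finset.range (N+2), g1 i = (∑ i ∈ Finset.range (N+1), g1 (i+1)) + g1 0 :=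
      Finset.sum_range_succ' g1 (N+1)
    have h3 : ∑ i ∈ Finset.range (N+2), g1 i = (∑ i ∈ Finset.range (N+1), g1 i) + g1 (N+1) :=
      Finset.sum_range_succ g1 (N+1)
    have h4 : g1 (N+1) = 0 := by
      simp only [hg1]
      rw [Nat.choose_succ_self]
      norm_num
    have h5 : g 0 = g1 0 := by simp only [hg, hg1]; norm_num
    have hT1 : ∑ i ∈ Finset.range (N+1), g1 i = poch (B - A) N * (B + N) := by
      have key : ∀ i ∈ Finset.range (N + 1), g1 i =
          ((-1 : ℝ) ^ i * (N.choose i : ℝ) * poch A i * poch (B + i) (N - i)) * (B + N) := by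
        intro i hi
        rw [Finset.mem_range] at hi
        have hi' : i ≤ N := Nat.lt_succ_iff.mp hi
        simp only [hg1]
        have e1 : N + 1 - i = (N - i) + 1 := by omega
        rw [e1, poch_succ]
        have e2 : (B + i) + ((N - i : ℕ) : ℝ) = B + N := by
          rw [Nat.cast_sub hi']; ring
        rw [e2]; ring
      rw [Finset.sum_congr rfl key, ← Finset.sum_mul, ih]
    have hT2 : ∑ i ∈ Finset.range (N+1), g2 i = -A * poch (B - A) N := by
      have key : ∀ i ∈ Finset.range (N + 1), g2 i =
          (-A) * ((-1 : ℝ) ^ i * (N.choose i : ℝ) * poch (A+1) i * poch ((B+1) + i) (N - i)) := by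
        intro i hi
        simp only [hg2]
        rw [poch_succ']
        have e : B + ((i+1 : ℕ) : ℝ) = (B+1) + i := by push_cast; ring
        rw [e]
        push_cast
        ring
      rw [Finset.sum_congr rfl key, ← Finset.mul_sum, ih]
      have : B + 1 - (A + 1) = B - A := by ring
      rw [this]
    have main : ∑ i ∈ Finset.range (N + 2), g i = poch (B - A) N * (B + N) + (-A) * poch (B - A) N := by
      rw [h0, Finset.sum_congr rfl h1, Finset.sum_add_distrib, h5]
      have e : (∑ i ∈ Finset.range (N+1), g1 (i+1)) + g1 0 = poch (B - A) N * (B + N) + g1 (N+1) := by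
        rw [← h2, h3, hT1, h4]
      linarith [hT2, e]
    have : ∑ i ∈ Finset.range (N + 1 + 1),
        (-1 : ℝ) ^ i * ((N+1).choose i : ℝ) * poch A i * poch (B + i) (N + 1 - i) =
        ∑ i ∈ Finset.range (N + 2), g i := rfl
    rw [this, main, poch_succ]
    ring

lemma poch_eq_zero {s N : ℕ} (hs : s < N) : poch ((s : ℝ) + 1 - N) N = 0 := by
  apply Finset.prod_eq_zero (Finset.mem_range.mpr (show N - 1 - s < N by omega))
  have : ((N - 1 - s : ℕ) : ℝ) = (N : ℝ) - 1 - s := by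
    push_cast [Nat.cast_sub (show s ≤ N - 1 by omega), Nat.cast_sub (show 1 ≤ N by omega)]
    ring
  rw [this]; ring
noncomputable def Breal (p q : ℝ) : ℝ := ∫ x in Set.Ioo (0:ℝ) 1, x ^ (p-1) * (1-x) ^ (q-1)

lemma beta_re_eq {p q : ℝ} {x : ℝ} (hx : x ∈ Set.Ioo (0:ℝ) 1) :
    ((x:ℂ) ^ ((p:ℂ)-1) * (1-(x:ℂ)) ^ ((q:ℂ)-1)) = (((x ^ (p-1) * (1-x) ^ (q-1) : ℝ)) : ℂ) := by
  obtain ⟨hx0, hx1⟩ := hx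
  have h1x : (0:ℝ) ≤ 1 - x := by linarith
  rw [show ((p:ℂ)-1) = ((p-1:ℝ):ℂ) by push_cast; ring,
      show ((q:ℂ)-1) = ((q-1:ℝ):ℂ) by push_cast; ring,
      ← Complex.ofReal_cpow hx0.le,
      show (1 - (x:ℂ)) = ((1-x : ℝ):ℂ) by push_cast; ring,
      ← Complex.ofReal_cpow h1x,
      ← Complex.ofReal_mul]

lemma betaIntegrable {p q : ℝ} (hp : 0 < p) (hq : 0 < q) :
    IntegrableOn (fun x : ℝ => x ^ (p-1) * (1-x) ^ (q-1)) (Set.Ioo 0 1) volume := by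
  have hc := Complex.betaIntegral_convergent (u := (p:ℂ)) (v := (q:ℂ)) (by simpa) (by simpa)
  rw [intervalIntegrable_iff_integrableOn_Ioc_of_le zero_le_one] at hc
  have hc' : IntegrableOn (fun x : ℝ => ((x:ℂ) ^ ((p:ℂ)-1) * (1-(x:ℂ)) ^ ((q:ℂ)-1)))
      (Set.Ioo 0 1) volume := hc.mono_set Set.Ioo_subset_Ioc_self
  have hre : IntegrableOn (fun x : ℝ => ((x:ℂ) ^ ((p:ℂ)-1) * (1-(x:ℂ)) ^ ((q:ℂ)-1)).re)
      (Set.Ioo 0 1) volume := hc'.re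
  apply IntegrableOn.congr_fun hre ?_ measurableSet_Ioo
  intro x hx
  show ((x:ℂ) ^ ((p:ℂ)-1) * (1-(x:ℂ)) ^ ((q:ℂ)-1)).re = _
  rw [beta_re_eq (p := p) (q := q) hx]
  simp

lemma complex_beta_eq {p q : ℝ} (hp : 0 < p) (hq : 0 < q) :
    Complex.betaIntegral (p:ℂ) (q:ℂ) = ((Breal p q : ℝ) : ℂ) := by
  rw [Complex.betaIntegral, intervalIntegral.integral_of_le zero_le_one,
      integral_Ioc_eq_integral_Ioo]
  rw [setIntegral_congr_fun measurableSet_Ioo (fun x hx => beta_re_eq (p := p) (q := q) hx)]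
  exact integral_ofReal

lemma breal_recurrence {p q : ℝ} (hp : 0 < p) (hq : 0 < q) :
    p * Breal p (q+1) = q * Breal (p+1) q := by
  have h := Complex.betaIntegral_recurrence (u := (p:ℂ)) (v := (q:ℂ)) (by simpa) (by simpa)
  rw [show ((q:ℂ)+1) = ((q+1:ℝ):ℂ) by push_cast; ring,
      show ((p:ℂ)+1) = ((p+1:ℝ):ℂ) by push_cast; ring,
      complex_beta_eq hp (by linarith), complex_beta_eq (by linarith) hq] at h
  have h2 : (((p * Breal p (q+1) : ℝ)) : ℂ) = (((q * Breal (p+1) q : ℝ)) : ℂ) := by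
    push_cast
    convert h using 2
  exact_mod_cast h2

lemma breal_split {p q : ℝ} (hp : 0 < p) (hq : 0 < q) :
    Breal p q = Breal (p+1) q + Breal p (q+1) := by
  rw [Breal, Breal, Breal, ← integral_add (betaIntegrable (by linarith) hq) (betaIntegrable hp (by linarith))]
  apply setIntegral_congr_fun measurableSet_Ioo
  intro x hx
  obtain ⟨hx0, hx1⟩ := hx
  have h1x : (0:ℝ) < 1 - x := by linarith
  show x ^ (p-1) * (1-x) ^ (q-1) = x ^ (p+1-1) * (1-x) ^ (q-1) + x ^ (p-1) * (1-x) ^ (q+1-1)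
  have e1 : x ^ (p+1-1) = x ^ (p-1) * x := by
    rw [show p+1-1 = (p-1)+1 by ring, Real.rpow_add hx0, Real.rpow_one]
  have e2 : (1-x) ^ (q+1-1) = (1-x) ^ (q-1) * (1-x) := by
    rw [show q+1-1 = (q-1)+1 by ring, Real.rpow_add h1x, Real.rpow_one]
  rw [e1, e2]
  ring

lemma breal_step {p q : ℝ} (hp : 0 < p) (hq : 0 < q) :
    q * Breal p q = (p + q) * Breal p (q+1) := by
  have h1 := breal_recurrence hp hq
  have h2 := breal_split hp hq
  nlinarith [h1, h2]

lemma breal_poch {p : ℝ} (hp : 0 < p) (r : ℕ) :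
    ∀ {q : ℝ}, 0 < q → Breal p q * poch q r = Breal p (q + r) * poch (p+q) r := by
  induction r with
  | zero => intro q hq; simp [poch_zero]
  | succ r ih =>
    intro q hq
    rw [poch_succ, poch_succ]
    have hqr : (0:ℝ) < q + r := by positivity
    have h := breal_step hp hqr
    have e : q + ((r+1 : ℕ) : ℝ) = (q + r) + 1 := by push_cast; ring
    rw [e]
    calc Breal p q * (poch q r * (q + r)) = (Breal p q * poch q r) * (q + r) := by ring
      _ = (Breal p (q + r) * poch (p+q) r) * (q + r) := by rw [ih hq]
      _ = ((q+r) * Breal p (q+r)) * poch (p+q) r := by ring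
      _ = ((p + (q+r)) * Breal p ((q+r)+1)) * poch (p+q) r := by rw [h]
      _ = Breal p (q + r + 1) * (poch (p+q) r * (p + q + r)) := by ring
/-- Jacobi polynomial `P_n^{(α,β)}(x)`. -/
noncomputable def jacobiP (α β : ℝ) (n : ℕ) (x : ℝ) : ℝ :=
  ∑ i ∈ Finset.range (n + 1),
    poch (α + i + 1) (n - i) * poch (n + α + β + 1) i /
      ((Nat.factorial (n - i) : ℝ) * (Nat.factorial i : ℝ)) * ((x - 1) / 2) ^ i

noncomputable def cJ (a b : ℝ) (N i : ℕ) : ℝ :=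
  poch (a + i + 1) (N - i) * poch (N + a + b + 1) i /
      ((Nat.factorial (N - i) : ℝ) * (Nat.factorial i : ℝ))

lemma jacobiP_eq (a b : ℝ) (N : ℕ) (x : ℝ) :
    jacobiP a b N (2*x-1) = ∑ i ∈ Finset.range (N + 1), cJ a b N i * (x-1) ^ i := by
  rw [jacobiP]
  apply Finset.sum_congr rfl
  intro i _
  rw [cJ, show (2*x-1-1)/2 = x - 1 by ring]

lemma poch_pos {a : ℝ} (ha : 0 < a) (m : ℕ) : 0 < poch a m := by
  apply Finset.prod_pos
  intro i _
  positivity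

lemma hpt {a b : ℝ} (N s : ℕ) {x : ℝ} (hx : x ∈ Set.Ioo (0:ℝ) 1) :
    jacobiP a b N (2*x-1) * x ^ s * (x ^ b * (1-x) ^ a) =
    ∑ i ∈ Finset.range (N + 1), (cJ a b N i * (-1) ^ i) *
      (x ^ ((b + s + 1) - 1) * (1-x) ^ ((a + i + 1) - 1)) := by
  obtain ⟨hx0, hx1⟩ := hx
  have h1x : (0:ℝ) < 1 - x := by linarith
  rw [jacobiP_eq, Finset.sum_mul, Finset.sum_mul]
  apply Finset.sum_congr rfl
  intro i _
  have h1 : (x-1) ^ i = (-1:ℝ) ^ i * (1-x) ^ i := by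
    rw [show x - 1 = -(1-x) by ring, neg_pow]
  have h2 : x ^ ((b + (s:ℝ) + 1) - 1) = x ^ b * x ^ s := by
    rw [show (b + (s:ℝ) + 1) - 1 = b + (s:ℝ) by ring, Real.rpow_add hx0, Real.rpow_natCast]
  have h3 : (1-x) ^ ((a + (i:ℝ) + 1) - 1) = (1-x) ^ a * (1-x) ^ i := by
    rw [show (a + (i:ℝ) + 1) - 1 = a + (i:ℝ) by ring, Real.rpow_add h1x, Real.rpow_natCast]
  rw [h1, h2, h3]
  ring

lemma ortho_mono {a b : ℝ} (ha : -1 < a) (hb : -1 < b) {N s : ℕ} (hs : s < N) :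
    ∫ x in Set.Ioo (0:ℝ) 1, jacobiP a b N (2*x-1) * x ^ s * (x ^ b * (1-x) ^ a) = 0 := by
  have hs0 : (0:ℝ) ≤ (s:ℝ) := Nat.cast_nonneg s
  have hp : (0:ℝ) < b + s + 1 := by linarith
  rw [setIntegral_congr_fun measurableSet_Ioo (fun x hx => hpt N s hx)]
  rw [integral_finset_sum _ (fun i _ => by
    exact (betaIntegrable hp (by linarith [Nat.cast_nonneg (α := ℝ) i] : (0:ℝ) < a + i + 1)).const_mul _)]
  have key : ∀ i ∈ Finset.range (N+1),
      (∫ x in Set.Ioo (0:ℝ) 1, (cJ a b N i * (-1) ^ i) *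
        (x ^ ((b + s + 1) - 1) * (1-x) ^ ((a + i + 1) - 1))) =
      (Breal (b + s + 1) (a + N + 1) / (N.factorial : ℝ)) *
        ((-1:ℝ) ^ i * (N.choose i : ℝ) * poch ((N:ℝ) + a + b + 1) i *
          poch ((a + b + s + 2) + i) (N - i)) := by
    intro i hi
    rw [Finset.mem_range] at hi
    have hi' : i ≤ N := Nat.lt_succ_iff.mp hi
    rw [MeasureTheory.integral_const_mul]
    have hBr : (∫ x in Set.Ioo (0:ℝ) 1, x ^ ((b + s + 1) - 1) * (1-x) ^ ((a + i + 1) - 1)) =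
        Breal (b + s + 1) (a + i + 1) := rfl
    rw [hBr]
    have hq : (0:ℝ) < a + i + 1 := by linarith [Nat.cast_nonneg (α := ℝ) i]
    have hrel := breal_poch hp (N - i) hq
    have hc1 : (a + (i:ℝ) + 1) + ((N - i : ℕ) : ℝ) = a + N + 1 := by
      rw [Nat.cast_sub hi']; ring
    have hc2 : (b + s + 1) + (a + (i:ℝ) + 1) = (a + b + s + 2) + i := by ring
    rw [hc1, hc2] at hrel
    -- hrel : Breal p (a+i+1) * poch (a+i+1) (N-i) = Breal p (a+N+1) * poch (a+b+s+2+i) (N-i)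
    have hfac : ((N.choose i : ℕ) : ℝ) * (i.factorial : ℝ) * ((N-i).factorial : ℝ)
        = (N.factorial : ℝ) := by
      exact_mod_cast congrArg (Nat.cast : ℕ → ℝ) (Nat.choose_mul_factorial_mul_factorial hi')
    have hpoch_ne : poch (a + (i:ℝ) + 1) (N - i) ≠ 0 := (poch_pos hq _).ne'
    have hf1 : ((N-i).factorial : ℝ) ≠ 0 := Nat.cast_ne_zero.mpr (Nat.factorial_ne_zero _)
    have hf2 : (i.factorial : ℝ) ≠ 0 := Nat.cast_ne_zero.mpr (Nat.factorial_ne_zero _)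
    have hf3 : (N.factorial : ℝ) ≠ 0 := Nat.cast_ne_zero.mpr (Nat.factorial_ne_zero _)
    rw [cJ]
    field_simp
    linear_combination (poch ((N:ℝ) + a + b + 1) i * (N.factorial : ℝ)) * hrel -
      (poch ((N:ℝ) + a + b + 1) i * Breal (b+s+1) (a+N+1) * poch ((a+b+s+2) + i) (N-i)) * hfac
  rw [Finset.sum_congr rfl key, ← Finset.mul_sum, vand]
  rw [show (a + b + (s:ℝ) + 2) - ((N:ℝ) + a + b + 1) = (s:ℝ) + 1 - N by ring]
  rw [poch_eq_zero hs, mul_zero]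
lemma jac_integrable {a b : ℝ} (ha : -1 < a) (hb : -1 < b) (N s : ℕ) :
    IntegrableOn (fun x : ℝ => jacobiP a b N (2*x-1) * x ^ s * (x ^ b * (1-x) ^ a))
      (Set.Ioo 0 1) volume := by
  have hp : (0:ℝ) < b + s + 1 := by linarith [Nat.cast_nonneg (α := ℝ) s]
  have h : IntegrableOn (fun x : ℝ => ∑ i ∈ Finset.range (N + 1), (cJ a b N i * (-1) ^ i) *
      (x ^ ((b + s + 1) - 1) * (1-x) ^ ((a + i + 1) - 1))) (Set.Ioo 0 1) volume := by
    apply MeasureTheory.integrable_finset_sum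
    intro i _
    exact (betaIntegrable hp (by linarith [Nat.cast_nonneg (α := ℝ) i] : (0:ℝ) < a + i + 1)).const_mul _
  exact h.congr_fun (fun x hx => (hpt N s hx).symm) measurableSet_Ioo

lemma ortho_pow {a b : ℝ} (ha : -1 < a) (hb : -1 < b) {N i : ℕ} (hi : i < N) :
    ∫ x in Set.Ioo (0:ℝ) 1, jacobiP a b N (2*x-1) * (x-1) ^ i * (x ^ b * (1-x) ^ a) = 0 := by
  have hpt2 : ∀ x ∈ Set.Ioo (0:ℝ) 1,
      jacobiP a b N (2*x-1) * (x-1) ^ i * (x ^ b * (1-x) ^ a) =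
      ∑ s ∈ Finset.range (i + 1), ((-1:ℝ) ^ (i-s) * (i.choose s : ℝ)) *
        (jacobiP a b N (2*x-1) * x ^ s * (x ^ b * (1-x) ^ a)) := by
    intro x _
    have hb2 : (x-1) ^ i = ∑ s ∈ Finset.range (i + 1), x ^ s * (-1:ℝ) ^ (i-s) * (i.choose s : ℝ) := by
      rw [show x - 1 = x + (-1) by ring, add_pow]
    rw [hb2, Finset.mul_sum, Finset.sum_mul]
    apply Finset.sum_congr rfl
    intro s _
    ring
  rw [setIntegral_congr_fun measurableSet_Ioo hpt2]
  rw [MeasureTheory.integral_finset_sum _ (fun s _ => (jac_integrable ha hb N s).const_mul _)]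
  apply Finset.sum_eq_zero
  intro s hsmem
  rw [Finset.mem_range] at hsmem
  rw [MeasureTheory.integral_const_mul, ortho_mono ha hb (by omega : s < N), mul_zero]

lemma jac_integrable_pow {a b : ℝ} (ha : -1 < a) (hb : -1 < b) (N i : ℕ) :
    IntegrableOn (fun x : ℝ => jacobiP a b N (2*x-1) * (x-1) ^ i * (x ^ b * (1-x) ^ a))
      (Set.Ioo 0 1) volume := by
  have h : IntegrableOn (fun x : ℝ => ∑ s ∈ Finset.range (i + 1), ((-1:ℝ) ^ (i-s) * (i.choose s : ℝ)) *
      (jacobiP a b N (2*x-1) * x ^ s * (x ^ b * (1-x) ^ a))) (Set.Ioo 0 1) volume := by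
    apply MeasureTheory.integrable_finset_sum
    intro s _
    exact (jac_integrable ha hb N s).const_mul _
  refine h.congr_fun (fun x hx => ?_) measurableSet_Ioo
  have hb2 : (x-1) ^ i = ∑ s ∈ Finset.range (i + 1), x ^ s * (-1:ℝ) ^ (i-s) * (i.choose s : ℝ) := by
    rw [show x - 1 = x + (-1) by ring, add_pow]
  show _ = jacobiP a b N (2*x-1) * (x-1) ^ i * (x ^ b * (1-x) ^ a)
  rw [hb2, Finset.mul_sum, Finset.sum_mul]
  apply Finset.sum_congr rfl
  intro s _
  ring

lemma ortho_poly {a b : ℝ} (ha : -1 < a) (hb : -1 < b) {M N : ℕ} (hNM : N < M) (d : ℕ → ℝ) :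
    ∫ x in Set.Ioo (0:ℝ) 1, jacobiP a b M (2*x-1) *
      (∑ i ∈ Finset.range (N + 1), d i * (x-1) ^ i) * (x ^ b * (1-x) ^ a) = 0 := by
  have hpt3 : ∀ x ∈ Set.Ioo (0:ℝ) 1,
      jacobiP a b M (2*x-1) * (∑ i ∈ Finset.range (N + 1), d i * (x-1) ^ i) * (x ^ b * (1-x) ^ a) =
      ∑ i ∈ Finset.range (N + 1), d i *
        (jacobiP a b M (2*x-1) * (x-1) ^ i * (x ^ b * (1-x) ^ a)) := by
    intro x _
    rw [Finset.mul_sum, Finset.sum_mul]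
    apply Finset.sum_congr rfl
    intro i _
    ring
  rw [setIntegral_congr_fun measurableSet_Ioo hpt3]
  rw [MeasureTheory.integral_finset_sum _ (fun i _ => (jac_integrable_pow ha hb M i).const_mul _)]
  apply Finset.sum_eq_zero
  intro i hi
  rw [Finset.mem_range] at hi
  rw [MeasureTheory.integral_const_mul, ortho_pow ha hb (by omega : i < M), mul_zero]

lemma cov_interval (f : ℝ → ℝ) :
    ∫ t in Set.Ioo (-1:ℝ) 1, f t = 2 * ∫ x in Set.Ioo (0:ℝ) 1, f (2*x-1) := by
  have h := intervalIntegral.integral_comp_mul_add (a := (0:ℝ)) (b := 1) f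
    (two_ne_zero) (-1)
  rw [show (2:ℝ)*0 + -1 = -1 by norm_num, show (2:ℝ)*1 + -1 = 1 by norm_num,
      intervalIntegral.integral_of_le (by norm_num : (0:ℝ) ≤ 1),
      intervalIntegral.integral_of_le (by norm_num : (-1:ℝ) ≤ 1),
      integral_Ioc_eq_integral_Ioo, integral_Ioc_eq_integral_Ioo, smul_eq_mul] at h
  have e : ∫ x in Set.Ioo (0:ℝ) 1, f (2*x-1) = ∫ x in Set.Ioo (0:ℝ) 1, f (2*x + -1) := by
    apply setIntegral_congr_fun measurableSet_Ioo
    intro x _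
    show f (2*x-1) = f (2*x + -1)
    rw [show 2*x + -1 = 2*x - 1 by ring]
  rw [e, h]
  ring

lemma gegenbauer_ortho {β : ℝ} (hβ : -1 < β) {j k : ℕ} (hjk : j ≠ k) :
    ∫ t in Set.Ioo (-1:ℝ) 1, jacobiP β β j t * jacobiP β β k t * (1-t^2) ^ β = 0 := by
  have core : ∀ j k : ℕ, j < k →
      ∫ t in Set.Ioo (-1:ℝ) 1, jacobiP β β j t * jacobiP β β k t * (1-t^2) ^ β = 0 := by
    intro j k hjk
    rw [cov_interval (fun t => jacobiP β β j t * jacobiP β β k t * (1-t^2) ^ β)]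
    have hpt4 : ∀ x ∈ Set.Ioo (0:ℝ) 1,
        jacobiP β β j (2*x-1) * jacobiP β β k (2*x-1) * (1-(2*x-1)^2) ^ β =
        ∑ i ∈ Finset.range (j + 1), ((4:ℝ) ^ β * cJ β β j i) *
          (jacobiP β β k (2*x-1) * (x-1) ^ i * (x ^ β * (1-x) ^ β)) := by
      intro x hx
      obtain ⟨hx0, hx1⟩ := hx
      have hw : (1-(2*x-1)^2) ^ β = (4:ℝ) ^ β * (x ^ β * (1-x) ^ β) := by
        rw [show 1-(2*x-1)^2 = 4 * (x * (1-x)) by ring,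
            Real.mul_rpow (by norm_num) (by nlinarith),
            Real.mul_rpow hx0.le (by linarith)]
      rw [hw, jacobiP_eq β β j x, Finset.sum_mul, Finset.sum_mul]
      apply Finset.sum_congr rfl
      intro i _
      ring
    rw [setIntegral_congr_fun measurableSet_Ioo hpt4]
    rw [MeasureTheory.integral_finset_sum _ (fun i _ => (jac_integrable_pow hβ hβ k i).const_mul _)]
    rw [Finset.sum_eq_zero, mul_zero]
    intro i hi
    rw [Finset.mem_range] at hi
    rw [MeasureTheory.integral_const_mul, ortho_pow hβ hβ (by omega : i < k), mul_zero]
  rcases Nat.lt_or_ge j k with h | h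
  · exact core j k h
  · have h' : k < j := by omega
    have := core k j h'
    rw [← this]
    apply setIntegral_congr_fun measurableSet_Ioo
    intro t _
    ring
/-- Koornwinder polynomial on the parabolic biangle,
`P^{(α,β)}_{n,k}(x,y) = P^{(α,β+k+1/2)}_{n-k}(2x-1) · x^{k/2} · P^{(β,β)}_k(y/√x)`. -/
noncomputable def biangleP (α β : ℝ) (n k : ℕ) (x y : ℝ) : ℝ :=
  jacobiP α (β + k + 1/2) (n - k) (2 * x - 1) * x ^ ((k : ℝ) / 2) *
    jacobiP β β k (y / Real.sqrt x)

lemma diff_poch {g : ℝ → ℝ} (hg : Differentiable ℝ g) (M : ℕ) :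
    Differentiable ℝ (fun a => poch (g a) M) := by
  induction M with
  | zero => simp only [poch_zero]; exact differentiable_const 1
  | succ M ih =>
    have h : (fun a => poch (g a) (M+1)) = fun a => poch (g a) M * (g a + M) :=
      funext fun a => poch_succ _ _
    rw [h]
    exact ih.mul (hg.add_const _)

lemma diff_cJ (b : ℝ) (N i : ℕ) : Differentiable ℝ (fun a => cJ a b N i) := by
  have h : (fun a => cJ a b N i) = fun a =>
      poch (a + i + 1) (N - i) * poch ((N:ℝ) + a + b + 1) i /
        ((Nat.factorial (N - i) : ℝ) * (Nat.factorial i : ℝ)) := rfl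
  rw [h]
  have h1 : Differentiable ℝ (fun a : ℝ => poch (a + i + 1) (N - i)) := by
    have e : (fun a : ℝ => poch (a + (i:ℝ) + 1) (N - i)) = fun a => poch (a + ((i:ℝ) + 1)) (N - i) :=
      funext fun a => by congr 1; ring
    rw [e]
    exact diff_poch ((differentiable_id).add_const _) (N - i)
  have h2 : Differentiable ℝ (fun a : ℝ => poch ((N:ℝ) + a + b + 1) i) := by
    have e : (fun a : ℝ => poch ((N:ℝ) + a + b + 1) i) = fun a => poch (a + ((N:ℝ) + b + 1)) i :=
      funext fun a => by congr 1; ring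
    rw [e]
    exact diff_poch ((differentiable_id).add_const _) i
  exact (h1.mul h2).div_const _

lemma jacobiP_cJ (a b : ℝ) (N : ℕ) (z : ℝ) :
    jacobiP a b N z = ∑ i ∈ Finset.range (N + 1), cJ a b N i * ((z-1)/2) ^ i := rfl

lemma diff_jacobi (b : ℝ) (N : ℕ) (z : ℝ) :
    Differentiable ℝ (fun a => jacobiP a b N z) := by
  have h : (fun a => jacobiP a b N z) =
      fun a => ∑ i ∈ Finset.range (N + 1), cJ a b N i * ((z-1)/2) ^ i :=
    funext fun a => jacobiP_cJ a b N z
  rw [h]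
  apply Differentiable.fun_sum
  intro i _
  exact (diff_cJ b N i).mul_const _

lemma deriv_jacobi (α b : ℝ) (N : ℕ) (z : ℝ) :
    deriv (fun a => jacobiP a b N z) α =
      ∑ i ∈ Finset.range (N + 1), (deriv (fun a => cJ a b N i) α) * ((z-1)/2) ^ i := by
  have h : (fun a => jacobiP a b N z) =
      fun a => ∑ i ∈ Finset.range (N + 1), cJ a b N i * ((z-1)/2) ^ i :=
    funext fun a => jacobiP_cJ a b N z
  rw [h, deriv_fun_sum (fun i _ => ((diff_cJ b N i).mul_const _).differentiableAt)]
  apply Finset.sum_congr rfl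
  intro i _
  rw [deriv_mul_const (diff_cJ b N i).differentiableAt]

lemma deriv_biangle (α β : ℝ) (n k : ℕ) (x y : ℝ) :
    deriv (fun a : ℝ => biangleP a β n k x y) α =
      deriv (fun a => jacobiP a (β + k + 1/2) (n - k) (2*x-1)) α *
        (x ^ ((k:ℝ)/2) * jacobiP β β k (y / Real.sqrt x)) := by
  have h : (fun a : ℝ => biangleP a β n k x y) =
      fun a => jacobiP a (β + k + 1/2) (n - k) (2*x-1) *
        (x ^ ((k:ℝ)/2) * jacobiP β β k (y / Real.sqrt x)) :=
    funext fun a => by rw [biangleP]; ring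
  rw [h, deriv_mul_const (diff_jacobi _ _ _).differentiableAt]
lemma det_aux (u t w : ℝ) :
    ((ContinuousLinearMap.fst ℝ ℝ ℝ).prod
      (u • ContinuousLinearMap.snd ℝ ℝ ℝ + t • (w • ContinuousLinearMap.fst ℝ ℝ ℝ))).det = u := by
  set L := (ContinuousLinearMap.fst ℝ ℝ ℝ).prod
      (u • ContinuousLinearMap.snd ℝ ℝ ℝ + t • (w • ContinuousLinearMap.fst ℝ ℝ ℝ)) with hL
  have hM : (L : ℝ×ℝ →ₗ[ℝ] ℝ×ℝ) =
      Matrix.toLin (Module.Basis.finTwoProd ℝ) (Module.Basis.finTwoProd ℝ) !![1, 0; t*w, u] := by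
    apply (Module.Basis.finTwoProd ℝ).ext
    intro i
    fin_cases i <;>
      simp [hL, Matrix.toLin_self, Fin.sum_univ_two, Module.Basis.finTwoProd_zero, Module.Basis.finTwoProd_one,
        Prod.ext_iff, mul_comm] <;> norm_num
  show LinearMap.det (L : ℝ×ℝ →ₗ[ℝ] ℝ×ℝ) = u
  rw [hM, LinearMap.det_toLin, Matrix.det_fin_two_of]
  ring

noncomputable def Tmap : ℝ × ℝ → ℝ × ℝ := fun p => (p.1, Real.sqrt p.1 * p.2)

noncomputable def Tder : ℝ × ℝ → (ℝ × ℝ →L[ℝ] ℝ × ℝ) := fun p =>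
  (ContinuousLinearMap.fst ℝ ℝ ℝ).prod
    (Real.sqrt p.1 • ContinuousLinearMap.snd ℝ ℝ ℝ +
      p.2 • ((1/(2*Real.sqrt p.1)) • ContinuousLinearMap.fst ℝ ℝ ℝ))

lemma hasfderiv_T {p : ℝ × ℝ} (hp : p.1 ≠ 0) : HasFDerivAt Tmap (Tder p) p := by
  apply HasFDerivAt.prodMk hasFDerivAt_fst
  have h1 : HasFDerivAt (fun q : ℝ × ℝ => Real.sqrt q.1)
      ((1/(2*Real.sqrt p.1)) • ContinuousLinearMap.fst ℝ ℝ ℝ) p := by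
    have := (Real.hasDerivAt_sqrt hp).comp_hasFDerivAt (𝕜 := ℝ) p (hasFDerivAt_fst (𝕜 := ℝ) (p := p))
    simpa [Function.comp_def] using this
  exact h1.mul hasFDerivAt_snd

lemma image_T :
    Tmap '' (Set.Ioo (0:ℝ) 1 ×ˢ Set.Ioo (-1:ℝ) 1) =
      {p : ℝ × ℝ | (0 < p.1 ∧ p.1 < 1) ∧ p.2^2 < p.1} := by
  ext p
  constructor
  · rintro ⟨⟨x, t⟩, hmem, rfl⟩
    obtain ⟨hx, ht⟩ := hmem
    simp only [Set.mem_Ioo] at hx ht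
    simp only [Tmap, Set.mem_setOf_eq]
    have h1 : (Real.sqrt x * t)^2 = x * t^2 := by
      rw [mul_pow, Real.sq_sqrt hx.1.le]
    refine ⟨⟨hx.1, hx.2⟩, ?_⟩
    rw [h1]
    have ht2 : t^2 < 1 := by nlinarith [ht.1, ht.2]
    nlinarith [mul_lt_mul_of_pos_left ht2 hx.1]
  · rintro ⟨⟨hu0, hu1⟩, hv⟩
    have hsu : (0:ℝ) < Real.sqrt p.1 := Real.sqrt_pos.mpr hu0
    refine ⟨(p.1, p.2 / Real.sqrt p.1), ⟨Set.mem_Ioo.mpr ⟨hu0, hu1⟩, ?_⟩, ?_⟩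
    · have ht2 : (p.2 / Real.sqrt p.1)^2 < 1 := by
        rw [div_pow, Real.sq_sqrt hu0.le, div_lt_one hu0]
        exact hv
      constructor
      · nlinarith [sq_nonneg (p.2 / Real.sqrt p.1 + 1)]
      · nlinarith [sq_nonneg (p.2 / Real.sqrt p.1 - 1)]
    · show (p.1, Real.sqrt p.1 * (p.2 / Real.sqrt p.1)) = p
      rw [mul_div_cancel₀ _ hsu.ne']

lemma line_null : volume ({p : ℝ × ℝ | p.1 = 1}) = 0 := by
  have h : ({p : ℝ × ℝ | p.1 = 1}) = ({(1:ℝ)} : Set ℝ) ×ˢ (Set.univ : Set ℝ) := by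
    ext p
    simp only [Set.mem_prod, Set.mem_singleton_iff, Set.mem_univ, and_true, Set.mem_setOf_eq]
  rw [h, Measure.volume_eq_prod, Measure.prod_prod, Real.volume_singleton, zero_mul]

lemma parabola_null : volume ({p : ℝ × ℝ | p.2^2 = p.1}) = 0 := by
  have hmeas : MeasurableSet ({p : ℝ × ℝ | p.2^2 = p.1}) :=
    (isClosed_eq ((continuous_pow 2).comp continuous_snd) continuous_fst).measurableSet
  rw [Measure.volume_eq_prod, Measure.prod_apply hmeas]
  have hslice : ∀ x : ℝ, volume (Prod.mk x ⁻¹' ({p : ℝ × ℝ | p.2^2 = p.1})) = 0 := by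
    intro x
    have hsub : (Prod.mk x ⁻¹' ({p : ℝ × ℝ | p.2^2 = p.1})) ⊆
        ({Real.sqrt x, -Real.sqrt x} : Set ℝ) := by
      intro y hy
      have hy2 : y^2 = x := hy
      have habs : |y| = Real.sqrt x := by
        rw [← hy2, Real.sqrt_sq_eq_abs]
      rcases (abs_eq (Real.sqrt_nonneg x)).mp habs with h | h
      · exact Or.inl h
      · exact Or.inr h
    exact measure_mono_null hsub
      (((Set.finite_singleton _).insert _).measure_zero _)
  simp only [hslice]
  simp

lemma region_ae :
    ({p : ℝ × ℝ | p.2 ^ 2 ≤ p.1 ∧ p.1 ≤ 1} : Set (ℝ × ℝ)) =ᵐ[volume]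
      ({p : ℝ × ℝ | (0 < p.1 ∧ p.1 < 1) ∧ p.2^2 < p.1} : Set (ℝ × ℝ)) := by
  rw [MeasureTheory.ae_eq_set]
  constructor
  · have hsub : Set.diff ({p : ℝ × ℝ | p.2 ^ 2 ≤ p.1 ∧ p.1 ≤ 1}) ({p : ℝ × ℝ | (0 < p.1 ∧ p.1 < 1) ∧ p.2^2 < p.1}) ⊆ ({p : ℝ × ℝ | p.1 = 1} ∪ {p : ℝ × ℝ | p.2^2 = p.1}) := by
      rintro p ⟨⟨h1, h2⟩, h3⟩
      simp only [Set.mem_setOf_eq] at h3 ⊢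
      by_cases hv : p.2^2 = p.1
      · exact Or.inr hv
      · have hlt : p.2^2 < p.1 := lt_of_le_of_ne h1 hv
        have hu0 : 0 < p.1 := lt_of_le_of_lt (sq_nonneg p.2) hlt
        left
        by_contra hne
        have hu1 : p.1 < 1 := lt_of_le_of_ne h2 hne
        exact h3 ⟨⟨hu0, hu1⟩, hlt⟩
    exact measure_mono_null hsub (measure_union_null line_null parabola_null)
  · have h : Set.diff ({p : ℝ × ℝ | (0 < p.1 ∧ p.1 < 1) ∧ p.2^2 < p.1}) ({p : ℝ × ℝ | p.2 ^ 2 ≤ p.1 ∧ p.1 ≤ 1}) = ∅ := by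
      ext p
      simp only [Set.diff, Set.mem_setOf_eq, Set.mem_empty_iff_false, iff_false]
      rintro ⟨⟨⟨h0, h1⟩, h2⟩, h3⟩
      exact h3 ⟨h2.le, h1.le⟩
    rw [show ({p : ℝ × ℝ | (0 < p.1 ∧ p.1 < 1) ∧ p.2^2 < p.1} : Set (ℝ×ℝ)) \ ({p : ℝ × ℝ | p.2 ^ 2 ≤ p.1 ∧ p.1 ≤ 1}) = Set.diff ({p : ℝ × ℝ | (0 < p.1 ∧ p.1 < 1) ∧ p.2^2 < p.1}) ({p : ℝ × ℝ | p.2 ^ 2 ≤ p.1 ∧ p.1 ≤ 1}) from rfl, h]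
    simp
/-- Vanishing cases of the inner product of a biangle Koornwinder polynomial with the
parameter derivative (in `α`) of another. -/
theorem biangle_inner_paramDeriv_eq_zero
    (α β : ℝ) (hα : α > -1) (hβ : β > -1) (n k m j : ℕ)
    (hk : 0 ≤ k) (hkn : k + 1 ≤ n) (hj : 0 ≤ j) (hjm : j ≤ m)
    (hcase : j ≠ k ∨ (j = k ∧ m > n)) :
    ∫ p in {p : ℝ × ℝ | p.2 ^ 2 ≤ p.1 ∧ p.1 ≤ 1},
        biangleP α β m j p.1 p.2 * deriv (fun a : ℝ => biangleP a β n k p.1 p.2) α *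
          ((1 - p.1) ^ α * (p.1 - p.2 ^ 2) ^ β) = 0 := by
  set s₀ : Set (ℝ × ℝ) := Set.Ioo (0:ℝ) 1 ×ˢ Set.Ioo (-1:ℝ) 1 with hs₀def
  set F : ℝ × ℝ → ℝ := fun p =>
    biangleP α β m j p.1 p.2 * deriv (fun a : ℝ => biangleP a β n k p.1 p.2) α *
      ((1 - p.1) ^ α * (p.1 - p.2 ^ 2) ^ β) with hF
  set G : ℝ → ℝ := fun x => jacobiP α (β + j + 1/2) (m - j) (2*x-1) *
      (deriv (fun a => jacobiP a (β + k + 1/2) (n - k) (2*x-1)) α) *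
      (x ^ (((j:ℝ) + k + 1)/2 + β) * (1-x) ^ α) with hG
  set H : ℝ → ℝ := fun t => jacobiP β β j t * jacobiP β β k t * (1-t^2) ^ β with hH
  have hs₀meas : MeasurableSet s₀ := measurableSet_Ioo.prod measurableSet_Ioo
  have step1 : ∫ p in {p : ℝ × ℝ | p.2 ^ 2 ≤ p.1 ∧ p.1 ≤ 1}, F p =
      ∫ p in Tmap '' s₀, F p := by
    rw [setIntegral_congr_set region_ae, image_T]
  have hf' : ∀ p ∈ s₀, HasFDerivWithinAt Tmap (Tder p) s₀ p := by
    intro p hp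
    have hx0 : 0 < p.1 := ((Set.mem_prod.mp hp).1).1
    exact (hasfderiv_T hx0.ne').hasFDerivWithinAt
  have hinj : Set.InjOn Tmap s₀ := by
    intro p hp q hq heq
    have hx0 : 0 < p.1 := ((Set.mem_prod.mp hp).1).1
    rw [Prod.ext_iff] at heq ⊢
    obtain ⟨h1, h2⟩ := heq
    simp only [Tmap] at h1 h2
    refine ⟨h1, ?_⟩
    rw [h1] at h2 hx0
    exact mul_left_cancel₀ (Real.sqrt_pos.mpr hx0).ne' h2
  have step2 : ∫ p in Tmap '' s₀, F p = ∫ p in s₀, |(Tder p).det| • F (Tmap p) :=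
    MeasureTheory.integral_image_eq_integral_abs_det_fderiv_smul volume hs₀meas hf' hinj F
  have step3 : ∀ p ∈ s₀, |(Tder p).det| • F (Tmap p) = G p.1 * H p.2 := by
    intro p hp
    obtain ⟨hx, ht⟩ := Set.mem_prod.mp hp
    obtain ⟨hx0, hx1⟩ := Set.mem_Ioo.mp hx
    obtain ⟨ht1, ht2⟩ := Set.mem_Ioo.mp ht
    have hsq0 : Real.sqrt p.1 ≠ 0 := (Real.sqrt_pos.mpr hx0).ne'
    have hdet : (Tder p).det = Real.sqrt p.1 := by
      simp only [Tder]
      exact det_aux (Real.sqrt p.1) p.2 (1/(2*Real.sqrt p.1))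
    have e1 : Real.sqrt p.1 * p.2 / Real.sqrt p.1 = p.2 := mul_div_cancel_left₀ p.2 hsq0
    have e2 : (Real.sqrt p.1 * p.2)^2 = p.1 * p.2^2 := by
      rw [mul_pow, Real.sq_sqrt hx0.le]
    have e3 : p.1 ^ (((j:ℝ) + (k:ℝ) + 1)/2 + β) =
        p.1 ^ ((j:ℝ)/2) * p.1 ^ ((k:ℝ)/2) * p.1 ^ β * p.1 ^ ((1:ℝ)/2) := by
      rw [← Real.rpow_add hx0, ← Real.rpow_add hx0, ← Real.rpow_add hx0]
      congr 1
      ring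
    have ht2' : (0:ℝ) ≤ 1 - p.2^2 := by nlinarith
    rw [hdet, abs_of_nonneg (Real.sqrt_nonneg _), smul_eq_mul, hF, hG, hH]
    simp only [Tmap]
    rw [biangleP, deriv_biangle α β n k p.1 (Real.sqrt p.1 * p.2), e1, e2,
        show p.1 - p.1 * p.2^2 = p.1 * (1 - p.2^2) by ring,
        Real.mul_rpow hx0.le ht2', e3, Real.sqrt_eq_rpow]
    ring
  have step4 : ∫ p in s₀, G p.1 * H p.2 =
      (∫ x in Set.Ioo (0:ℝ) 1, G x) * (∫ t in Set.Ioo (-1:ℝ) 1, H t) := by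
    rw [hs₀def, Measure.volume_eq_prod]
    exact MeasureTheory.setIntegral_prod_mul G H _ _
  rw [step1, step2, setIntegral_congr_fun hs₀meas step3, step4]
  rcases hcase with hne | ⟨heq, hmn⟩
  · rw [gegenbauer_ortho hβ hne, mul_zero]
  · subst heq
    have hb'pos : (-1:ℝ) < β + (j:ℝ) + 1/2 := by linarith [Nat.cast_nonneg (α := ℝ) j]
    have hMN : n - j < m - j := by omega
    have hGzero : (∫ x in Set.Ioo (0:ℝ) 1, G x) = 0 := by
      have hptG : ∀ x ∈ Set.Ioo (0:ℝ) 1, G x =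
          jacobiP α (β + (j:ℝ) + 1/2) (m - j) (2*x-1) *
            (∑ i ∈ Finset.range ((n - j) + 1),
              (deriv (fun a => cJ a (β + (j:ℝ) + 1/2) (n - j) i) α) * (x-1) ^ i) *
            (x ^ (β + (j:ℝ) + 1/2) * (1-x) ^ α) := by
        intro x _
        rw [hG]
        simp only
        rw [deriv_jacobi α (β + (j:ℝ) + 1/2) (n - j) (2*x-1),
            show ((j:ℝ) + (j:ℝ) + 1)/2 + β = β + (j:ℝ) + 1/2 by ring]
        congr 2
        apply Finset.sum_congr rfl
        intro i _
        rw [show (2*x-1-1)/2 = x - 1 by ring]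
      rw [setIntegral_congr_fun measurableSet_Ioo hptG]
      exact ortho_poly hα hb'pos hMN _
    rw [hGzero, zero_mul]
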